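/- arXiv:1212.2930 — 2 statements merged into one kernel-verified Lean document; each statement's English description precedes it below -/
import Mathlib

section
/- Let p be an odd prime, t ≥ 1, and let a be an integer with gcd(a,p) = 1. If the Legendre symbol (a/p) = 1, then #S̄_2(a;p^t) = (p−3)p^{t−1}/2 + p^{t−1}/(p+1) + 3/2 + (−1)^{t−1}(p−1)/(2(p+1)). If (a/p) = −1, then #S̄_2(a;p^t) = φ(p^t)/2, where φ is Euler's totient function. -/
/-- The reduced coordinate sumset `S̄_2(a;n)` of the modular hyperbola `H_2(a;n)`. -/
def coordSumset (a : ℤ) (n : ℕ) : Set (ZMod n) :=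
  {s | ∃ x y : ℤ, x * y ≡ a [ZMOD (n : ℤ)] ∧ 1 ≤ x ∧ x < n ∧ 1 ≤ y ∧ y < n ∧
    s = ((x + y : ℤ) : ZMod n)}

open Finset


lemma coprime_two_mul (p : ℕ) (hp : p.Prime) (hp2 : p ≠ 2) (r : ℤ) (hpr : ¬(p:ℤ) ∣ r) :
    IsCoprime (2*r) (p:ℤ) := by
  have hpZ : Prime (p:ℤ) := Nat.prime_iff_prime_int.mp hp
  rw [isCoprime_comm, hpZ.coprime_iff_not_dvd, hpZ.dvd_mul]
  push_neg
  refine ⟨fun hd => ?_, hpr⟩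
  have h3 : (3:ℤ) ≤ p := by exact_mod_cast (Nat.Prime.two_le hp).lt_of_ne (Ne.symm hp2)
  have := Int.le_of_dvd (by norm_num) hd
  omega

/-- Hensel lifting for square roots mod odd prime powers, integer version. -/
lemma hensel_sq (p : ℕ) (hp : p.Prime) (hp2 : p ≠ 2) (u : ℤ) (hu : ¬ (p:ℤ) ∣ u)
    (h1 : ∃ r : ℤ, (p:ℤ) ∣ r^2 - u) (k : ℕ) : ∃ r : ℤ, (p:ℤ)^(k+1) ∣ r^2 - u := by
  induction k with
  | zero => simpa using h1
  | succ k ih =>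
    obtain ⟨r, hr⟩ := ih
    have hr1 : (p:ℤ) ∣ r^2 - u := dvd_trans (dvd_pow_self _ (Nat.succ_ne_zero k)) hr
    have hpr : ¬ (p:ℤ) ∣ r := by
      intro hd
      apply hu
      have h2 : (p:ℤ) ∣ r^2 := by rw [sq]; exact hd.mul_right r
      have := dvd_sub h2 hr1
      simpa using this
    obtain ⟨c, d, hcd⟩ := coprime_two_mul p hp hp2 r hpr
    obtain ⟨m, hm⟩ := hr
    refine ⟨r - (p:ℤ)^(k+1) * (m*c), ?_⟩
    have expand : (r - (p:ℤ)^(k+1) * (m*c))^2 - u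
        = ((p:ℤ)^(k+1)*m) * (1 - (2*r)*c) + ((p:ℤ)^(k+1))^2 * (m*c)^2 - ((p:ℤ)^(k+1)*m - (r^2 - u)) := by
      ring
    rw [expand, hm, sub_self, sub_zero]
    have h1d : (p:ℤ)^(k+2) ∣ ((p:ℤ)^(k+1)*m) * (1 - (2*r)*c) := by
      have : 1 - (2*r)*c = (p:ℤ)*d := by linarith [hcd]
      rw [this]
      rw [pow_succ]
      exact ⟨d*m, by ring⟩
    have h2d : (p:ℤ)^(k+2) ∣ ((p:ℤ)^(k+1))^2 * (m*c)^2 := by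
      apply dvd_mul_of_dvd_left
      rw [← pow_mul]
      exact pow_dvd_pow _ (by omega)
    exact dvd_add h1d h2d


lemma zmod_intCast_eq (m : ℕ) (x y : ℤ) (h : ((m:ℤ)) ∣ x - y) :
    ((x : ZMod m)) = (y : ZMod m) := by
  rw [← sub_eq_zero, ← Int.cast_sub, ZMod.intCast_zmod_eq_zero_iff_dvd]; exact h

lemma zmod_intCast_iff (m : ℕ) (x y : ℤ) :
    ((x : ZMod m)) = (y : ZMod m) ↔ ((m:ℤ)) ∣ x - y := by
  constructor
  · intro h
    rw [← ZMod.intCast_zmod_eq_zero_iff_dvd, Int.cast_sub, h, sub_self]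
  · exact zmod_intCast_eq m x y

/-- A `p`-adic-valuation criterion for being a square in `ZMod (p^t)`. -/
lemma sq_eq_pow_mul_iff (p : ℕ) [hpf : Fact p.Prime] (hp2 : p ≠ 2) {t : ℕ} (ht : 1 ≤ t)
    {j : ℕ} (hj : j < t) {u : ℤ} (hu : ¬ (p:ℤ) ∣ u) :
    (∃ r : ZMod (p^t), r^2 = (((p:ℤ)^j * u : ℤ) : ZMod (p^t))) ↔
      Even j ∧ legendreSym p u = 1 := by
  have hp := hpf.out
  have hp0 : (0:ℤ) < p := by exact_mod_cast hp.pos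
  have hu0 : (u : ZMod p) ≠ 0 := by
    rw [Ne, ZMod.intCast_zmod_eq_zero_iff_dvd]; exact hu
  constructor
  · rintro ⟨r, hr⟩
    set n : ℕ := r.val with hn
    have hrn : ((n : ℤ) : ZMod (p^t)) = r := by
      rw [Int.cast_natCast, hn, ZMod.natCast_val, ZMod.cast_id]
    have hdvd : (((p^t : ℕ)):ℤ) ∣ ((n:ℤ)^2 - (p:ℤ)^j * u) := by
      rw [← ZMod.intCast_zmod_eq_zero_iff_dvd, Int.cast_sub, Int.cast_pow, hrn]
      rw [← hr]
      push_cast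
      ring
    obtain ⟨M, hM⟩ := hdvd
    have hM' : (n:ℤ)^2 - (p:ℤ)^j * u = (p:ℤ)^t * M := by push_cast at hM ⊢; linarith [hM]
    set K : ℤ := u + (p:ℤ)^(t-j) * M with hK
    have hpjK : (n:ℤ)^2 = (p:ℤ)^j * K := by
      rw [hK, mul_add, ← mul_assoc, ← pow_add]
      have hjt : j + (t - j) = t := by omega
      rw [hjt]
      linarith [hM']
    have hpK : ¬ (p:ℤ) ∣ K := by
      intro hd
      apply hu
      have h2 : (p:ℤ) ∣ (p:ℤ)^(t-j) * M := dvd_mul_of_dvd_left (dvd_pow_self _ (by omega)) _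
      have := dvd_sub hd h2
      simpa [hK] using this
    have hK0 : 0 < K := by
      rcases lt_trichotomy K 0 with h | h | h
      · nlinarith [sq_nonneg (n:ℤ), pow_pos hp0 j]
      · exact absurd (h ▸ dvd_zero _) hpK
      · exact h
    have hn0 : n ≠ 0 := by
      intro h
      rw [h] at hpjK
      have : (0:ℤ) < (p:ℤ)^j * K := by positivity
      simp at hpjK
      omega
    have hKnat : ((K.toNat : ℤ)) = K := Int.toNat_of_nonneg hK0.le
    have hnat : n^2 = p^j * K.toNat := by
      have : ((n^2 : ℕ) : ℤ) = ((p^j * K.toNat : ℕ) : ℤ) := by push_cast [hKnat]; linarith [hpjK]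
      exact_mod_cast this
    have hKt0 : K.toNat ≠ 0 := by omega
    have hpKn : ¬ p ∣ K.toNat := by
      intro hd; apply hpK; rw [← hKnat]; exact_mod_cast Int.natCast_dvd_natCast.mpr hd
    have hfact : (n^2).factorization p = 2 * n.factorization p := by
      rw [Nat.factorization_pow]; simp [mul_comm]
    have hfact2 : (p^j * K.toNat).factorization p = j := by
      rw [Nat.factorization_mul (pow_ne_zero _ hp.pos.ne') hKt0]
      simp [Nat.Prime.factorization_pow hp, Nat.factorization_eq_zero_of_not_dvd hpKn]
    have hje : j = 2 * (n.factorization p) := by rw [← hfact2, ← hnat, hfact]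
    refine ⟨⟨n.factorization p, by omega⟩, ?_⟩
    obtain ⟨n', hn'⟩ := Nat.ordProj_dvd n p
    have hsq : n'^2 = K.toNat := by
      have h1 : (p^(n.factorization p))^2 * n'^2 = (p^(n.factorization p))^2 * K.toNat := by
        rw [← mul_pow, ← hn', hnat, hje]
        ring
      exact Nat.eq_of_mul_eq_mul_left (pow_pos (pow_pos hp.pos _) 2) h1
    rw [legendreSym.eq_one_iff p hu0]
    refine ⟨(n' : ZMod p), ?_⟩
    have hKu : ((K : ZMod p)) = (u : ZMod p) := by
      apply zmod_intCast_eq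
      simp only [hK, add_sub_cancel_left]
      exact dvd_mul_of_dvd_left (dvd_pow_self _ (by omega)) _
    calc (u : ZMod p) = (K : ZMod p) := hKu.symm
      _ = ((K.toNat : ℕ) : ZMod p) := by
        have h2 := congrArg (fun z : ℤ => (z : ZMod p)) hKnat
        push_cast at h2
        exact h2.symm
      _ = ((n'^2 : ℕ) : ZMod p) := by rw [hsq]
      _ = (n' : ZMod p) * (n' : ZMod p) := by push_cast; ring
  · rintro ⟨⟨e, he⟩, hl⟩
    rw [legendreSym.eq_one_iff p hu0] at hl
    obtain ⟨s, hs⟩ := hl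
    have h1 : ∃ r : ℤ, (p:ℤ) ∣ r^2 - u := by
      refine ⟨(s.val : ℤ), ?_⟩
      have : (((s.val:ℤ)^2 - u : ℤ) : ZMod p) = 0 := by
        push_cast
        rw [ZMod.natCast_val, ZMod.cast_id, sq, ← hs]
        ring
      rwa [ZMod.intCast_zmod_eq_zero_iff_dvd] at this
    obtain ⟨R, hR⟩ := hensel_sq p hp hp2 u hu h1 (t-1)
    have hR' : ((p:ℤ))^t ∣ R^2 - u := by
      have htt : t - 1 + 1 = t := by omega
      rwa [htt] at hR
    refine ⟨(((p:ℤ)^e * R : ℤ) : ZMod (p^t)), ?_⟩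
    rw [← Int.cast_pow]
    apply zmod_intCast_eq
    push_cast
    have hkey : ((p:ℤ)^e * R)^2 - (p:ℤ)^j * u = (p:ℤ)^j * (R^2 - u) := by
      rw [he]; ring
    rw [hkey]
    exact dvd_mul_of_dvd_right hR' _

section fiber
variable (p t : ℕ)

/-- Reduction map from `ZMod (p^t)` to `ZMod p` via `val`. -/
def redn (p t : ℕ) (s : ZMod (p^t)) : ZMod p := (s.val : ZMod p)

lemma card_fiber [NeZero p] (hp : 0 < p) (ht : 1 ≤ t) (x : ZMod p) :
    (Finset.univ.filter (fun s : ZMod (p^t) => redn p t s = x)).card = p^(t-1) := by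
  haveI : NeZero p := ⟨hp.ne'⟩
  haveI : NeZero (p^t) := ⟨pow_ne_zero _ hp.ne'⟩
  have hxp : x.val < p := ZMod.val_lt x
  have hpt : p * p^(t-1) = p^t := by
    rw [← pow_succ']
    congr 1
    omega
  have hpt2 : p^(t-1) * p = p^t := by rw [mul_comm]; exact hpt
  rw [← Finset.card_range (p^(t-1))]
  apply Finset.card_nbij' (i := fun s => s.val / p)
    (j := fun k => ((x.val + p*k : ℕ) : ZMod (p^t)))
  · intro s hs
    simp only [Finset.mem_coe, Finset.mem_range]
    have := ZMod.val_lt s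
    rw [Nat.div_lt_iff_lt_mul hp, hpt2]
    exact this
  · intro k hk
    simp only [Finset.mem_coe, Finset.mem_range] at hk
    have hlt : x.val + p*k < p^t := by
      calc x.val + p*k < p + p*k := by omega
        _ = p * (k+1) := by ring
        _ ≤ p * p^(t-1) := Nat.mul_le_mul_left p (by omega)
        _ = p^t := hpt
    simp only [Finset.mem_coe, Finset.mem_filter, Finset.mem_univ, true_and]
    unfold redn
    rw [ZMod.val_cast_of_lt hlt]
    push_cast
    simp [ZMod.natCast_val, ZMod.cast_id, ZMod.natCast_self]
  · intro s hs
    simp only [Finset.mem_coe, Finset.mem_filter, Finset.mem_univ, true_and] at hs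
    unfold redn at hs
    have hv : x.val = s.val % p := by rw [← hs, ZMod.val_natCast]
    have : x.val + p * (s.val / p) = s.val := by
      rw [hv]; exact Nat.mod_add_div _ _
    beta_reduce
    rw [this, ZMod.natCast_val, ZMod.cast_id]
  · intro k hk
    simp only [Finset.mem_coe, Finset.mem_range] at hk
    have hlt : x.val + p*k < p^t := by
      calc x.val + p*k < p + p*k := by omega
        _ = p * (k+1) := by ring
        _ ≤ p * p^(t-1) := Nat.mul_le_mul_left p (by omega)
        _ = p^t := hpt
    beta_reduce
    rw [ZMod.val_cast_of_lt hlt]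
    rw [Nat.add_mul_div_left _ _ hp, Nat.div_eq_of_lt hxp, zero_add]

lemma card_red_filter [NeZero p] (hp : 0 < p) (ht : 1 ≤ t) (P : ZMod p → Prop) [DecidablePred P] :
    (Finset.univ.filter (fun s : ZMod (p^t) => P (redn p t s))).card
      = (Finset.univ.filter P).card * p^(t-1) := by
  haveI : NeZero p := ⟨hp.ne'⟩
  haveI : NeZero (p^t) := ⟨pow_ne_zero _ hp.ne'⟩
  rw [Finset.card_eq_sum_card_fiberwise
    (f := redn p t) (t := Finset.univ.filter P)
    (fun s hs => by simpa using (Finset.mem_filter.mp hs).2)]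
  rw [Finset.sum_congr rfl (fun x hx => ?_), Finset.sum_const, smul_eq_mul]
  have hPx : P x := (Finset.mem_filter.mp hx).2
  have : (Finset.univ.filter (fun s : ZMod (p^t) => P (redn p t s))).filter
      (fun s => redn p t s = x) = Finset.univ.filter (fun s => redn p t s = x) := by
    ext s
    simp only [Finset.mem_filter, Finset.mem_univ, true_and]
    constructor
    · tauto
    · intro h; exact ⟨h ▸ hPx, h⟩
  rw [this, card_fiber p t hp ht x]
end fiber

open Finset

section field
variable (p : ℕ) [hpf : Fact p.Prime]

lemma two_ne_zero'' (hp2 : p ≠ 2) : (2 : ZMod p) ≠ 0 := by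
  have h : ((2:ℕ) : ZMod p) ≠ 0 := by
    rw [Ne, ZMod.natCast_eq_zero_iff]
    intro h
    have := Nat.le_of_dvd (by norm_num) h
    have := hpf.out.two_le
    omega
  simpa using h

lemma char_ne_two (hp2 : p ≠ 2) : ringChar (ZMod p) ≠ 2 := by
  rw [ZMod.ringChar_zmod_n]; exact hp2

lemma sq_mul_sq' {x y : ZMod p} (hx : IsSquare x) (hy : IsSquare y) : IsSquare (x*y) := by
  obtain ⟨c, hc⟩ := hx; obtain ⟨d, hd⟩ := hy
  exact ⟨c*d, by rw [hc, hd]; ring⟩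

lemma isSquare_inv_iff {x : ZMod p} : IsSquare x⁻¹ ↔ IsSquare x := by
  constructor
  · rintro ⟨d, hd⟩
    refine ⟨d⁻¹, ?_⟩
    rw [← inv_inv x, hd, mul_inv]
  · rintro ⟨d, hd⟩
    exact ⟨d⁻¹, by rw [hd, mul_inv]⟩

lemma nonsq_mul_nonsq (hp2 : p ≠ 2) {x y : ZMod p} (hx : x ≠ 0) (hy : y ≠ 0)
    (hx' : ¬IsSquare x) (hy' : ¬IsSquare y) : IsSquare (x*y) := by
  have h1 : quadraticChar (ZMod p) x = -1 := quadraticChar_neg_one_iff_not_isSquare.mpr hx'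
  have h2 : quadraticChar (ZMod p) y = -1 := quadraticChar_neg_one_iff_not_isSquare.mpr hy'
  have h3 : quadraticChar (ZMod p) (x*y) = 1 := by rw [map_mul, h1, h2]; ring
  exact (quadraticChar_one_iff_isSquare (mul_ne_zero hx hy)).mp h3

lemma sq_mul_nonsq {x y : ZMod p} (hx' : IsSquare x) (hx : x ≠ 0) (hy' : ¬IsSquare y) :
    ¬IsSquare (x*y) := by
  intro h
  apply hy'
  have hxy : y = (x*y) * x⁻¹ := by field_simp
  rw [hxy]
  exact sq_mul_sq' p h ((isSquare_inv_iff p).mpr hx')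

/-- Exactly `(p-1)/2` nonzero elements have the same quadratic nature as a fixed `b ≠ 0`. -/
lemma card_same_nature (hp2 : p ≠ 2) (b : ZMod p) (hb : b ≠ 0) :
    2 * (univ.filter fun x : ZMod p => x ≠ 0 ∧ (IsSquare x ↔ IsSquare b)).card + 1 = p := by
  classical
  set Sp := univ.filter fun x : ZMod p => x ≠ 0 ∧ IsSquare x with hSp
  set Sm := univ.filter fun x : ZMod p => x ≠ 0 ∧ ¬IsSquare x with hSm
  obtain ⟨ns, hns⟩ := FiniteField.exists_nonsquare (char_ne_two p hp2)
  have hns0 : ns ≠ 0 := fun h => hns (by simp [h])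
  have hcard : Sp.card = Sm.card := by
    apply Finset.card_nbij' (i := fun x => ns * x) (j := fun y => ns⁻¹ * y)
    · intro x hx
      simp only [hSp, hSm, mem_coe, mem_filter, mem_univ, true_and] at hx ⊢
      exact ⟨mul_ne_zero hns0 hx.1, by rw [mul_comm]; exact sq_mul_nonsq p hx.2 hx.1 hns⟩
    · intro y hy
      simp only [hSp, hSm, mem_coe, mem_filter, mem_univ, true_and] at hy ⊢
      refine ⟨mul_ne_zero (inv_ne_zero hns0) hy.1, ?_⟩
      exact nonsq_mul_nonsq p hp2 (inv_ne_zero hns0) hy.1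
        (fun h => hns ((isSquare_inv_iff p).mp h)) hy.2
    · intro x hx; field_simp
    · intro y hy; field_simp
  have hunion : Sp ∪ Sm = univ.filter (fun x : ZMod p => x ≠ 0) := by
    ext x
    simp only [hSp, hSm, mem_union, mem_filter, mem_univ, true_and]
    tauto
  have hdisj : Disjoint Sp Sm := by
    rw [Finset.disjoint_filter]
    tauto
  have hsum : Sp.card + Sm.card = p - 1 := by
    rw [← Finset.card_union_of_disjoint hdisj, hunion]
    rw [Finset.filter_ne']
    rw [Finset.card_erase_of_mem (mem_univ 0), Finset.card_univ, ZMod.card]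
  have hp1 : 1 ≤ p := hpf.out.pos
  by_cases hsb : IsSquare b
  · have : (univ.filter fun x : ZMod p => x ≠ 0 ∧ (IsSquare x ↔ IsSquare b)) = Sp := by
      ext x; simp only [hSp, mem_filter, mem_univ, true_and]; tauto
    rw [this]
    omega
  · have : (univ.filter fun x : ZMod p => x ≠ 0 ∧ (IsSquare x ↔ IsSquare b)) = Sm := by
      ext x; simp only [hSm, mem_filter, mem_univ, true_and]; tauto
    rw [this]
    omega
end field
open Finset
section field2
variable (p : ℕ) [hpf : Fact p.Prime]


lemma sqrt_card_zero : (univ.filter fun r : ZMod p => r^2 = 0).card = 1 := by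
  have : (univ.filter fun r : ZMod p => r^2 = 0) = {0} := by
    ext r; simp [pow_eq_zero_iff]
  rw [this, card_singleton]

lemma sqrt_card_ns {c : ZMod p} (h : ¬IsSquare c) :
    (univ.filter fun r : ZMod p => r^2 = c).card = 0 := by
  rw [Finset.card_eq_zero, Finset.filter_eq_empty_iff]
  intro r _ hr
  exact h ⟨r, by rw [← hr]; ring⟩

lemma sqrt_card_sq (hp2 : p ≠ 2) {c : ZMod p} (hc : c ≠ 0) (h : IsSquare c) :
    (univ.filter fun r : ZMod p => r^2 = c).card = 2 := by
  obtain ⟨d, hd⟩ := h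
  have hd0 : d ≠ 0 := fun h0 => hc (by simp [hd, h0])
  have hne : d ≠ -d := by
    intro he
    have h2d : (2:ZMod p) * d = 0 := by linear_combination he
    rcases mul_eq_zero.mp h2d with h' | h'
    · exact two_ne_zero'' p hp2 h'
    · exact hd0 h'
  have : (univ.filter fun r : ZMod p => r^2 = c) = {d, -d} := by
    ext r
    simp only [mem_filter, mem_univ, true_and, mem_insert, mem_singleton]
    constructor
    · intro hr
      have hfac : (r - d) * (r + d) = 0 := by linear_combination hr + hd
      rcases mul_eq_zero.mp hfac with h' | h'
      · left; linear_combination h'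
      · right; linear_combination h'
    · rintro (rfl | rfl) <;> rw [hd] <;> ring
  rw [this, Finset.card_insert_of_notMem (by simpa using hne), card_singleton]

/-- The master field-level count. -/
lemma field_count (hp2 : p ≠ 2) (A : ZMod p) (hA : A ≠ 0) :
    2 * (univ.filter fun x : ZMod p => x^2 - 4*A ≠ 0 ∧ IsSquare (x^2-4*A)).card
      + (univ.filter fun x : ZMod p => x^2 = 4*A).card + 1 = p := by
  classical
  have h2 : (2 : ZMod p) ≠ 0 := two_ne_zero'' p hp2
  have h4A : (4:ZMod p)*A ≠ 0 := by
    have h4 : (4:ZMod p) = 2*2 := by norm_num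
    exact mul_ne_zero (h4 ▸ mul_ne_zero h2 h2) hA
  set Pairs := univ.filter (fun z : ZMod p × ZMod p => z.2^2 = z.1^2 - 4*A) with hPairs
  set Hyp := univ.filter (fun z : ZMod p × ZMod p => z.1 * z.2 = 4*A) with hHyp
  have hcard1 : Pairs.card = Hyp.card := by
    apply Finset.card_nbij' (i := fun z => (z.1 + z.2, z.1 - z.2))
      (j := fun w => ((w.1+w.2) * (2:ZMod p)⁻¹, (w.1-w.2) * (2:ZMod p)⁻¹))
    · intro z hz
      simp only [hPairs, hHyp, mem_coe, mem_filter, mem_univ, true_and] at hz ⊢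
      linear_combination -hz
    · intro w hw
      simp only [hPairs, hHyp, mem_coe, mem_filter, mem_univ, true_and] at hw ⊢
      field_simp
      linear_combination -(4:ZMod p)*hw
    · intro z _
      have : ((z.1 + z.2 + (z.1 - z.2)) * (2:ZMod p)⁻¹, (z.1 + z.2 - (z.1 - z.2)) * (2:ZMod p)⁻¹)
          = (z.1, z.2) := by
        rw [Prod.mk.injEq]
        constructor <;> field_simp <;> ring
      exact this
    · intro w _
      have : ((w.1+w.2) * (2:ZMod p)⁻¹ + (w.1-w.2) * (2:ZMod p)⁻¹,
          (w.1+w.2) * (2:ZMod p)⁻¹ - (w.1-w.2) * (2:ZMod p)⁻¹) = (w.1, w.2) := by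
        rw [Prod.mk.injEq]
        constructor <;> field_simp <;> ring
      exact this
  have hcard2 : Hyp.card + 1 = p := by
    have hbij : Hyp.card = (univ.filter (fun x : ZMod p => x ≠ 0)).card := by
      apply Finset.card_nbij' (i := fun z => z.1) (j := fun x => (x, x⁻¹ * (4*A)))
      · intro z hz
        simp only [hHyp, mem_coe, mem_filter, mem_univ, true_and] at hz ⊢
        intro h0
        rw [h0, zero_mul] at hz
        exact h4A hz.symm
      · intro x hx
        simp only [hHyp, mem_coe, mem_filter, mem_univ, true_and] at hx ⊢
        field_simp
      · intro z hz
        simp only [hHyp, mem_coe, mem_filter, mem_univ, true_and] at hz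
        have hz1 : z.1 ≠ 0 := by
          intro h0; rw [h0, zero_mul] at hz; exact h4A hz.symm
        have : (z.1, z.1⁻¹ * (4*A)) = (z.1, z.2) := by
          rw [Prod.mk.injEq]
          refine ⟨rfl, ?_⟩
          field_simp
          rw [← hz]
        exact this
      · intro x _; rfl
    rw [hbij, Finset.filter_ne', Finset.card_erase_of_mem (mem_univ 0), Finset.card_univ,
      ZMod.card]
    have := hpf.out.pos
    omega
  have hfib : Pairs.card = ∑ x : ZMod p,
      (univ.filter fun r : ZMod p => r^2 = x^2 - 4*A).card := by
    rw [Finset.card_eq_sum_card_fiberwise (f := fun z : ZMod p × ZMod p => z.1)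
      (t := univ) (fun z _ => mem_univ _)]
    apply Finset.sum_congr rfl
    intro x _
    apply Finset.card_nbij' (i := fun z => z.2) (j := fun r => (x, r))
    · intro z hz
      simp only [hPairs, mem_coe, mem_filter, mem_univ, true_and] at hz ⊢
      rw [← hz.2]
      exact hz.1
    · intro r hr
      simp only [hPairs, mem_coe, mem_filter, mem_univ, true_and] at hr ⊢
      exact ⟨hr, trivial⟩
    · intro z hz
      simp only [hPairs, mem_coe, mem_filter, mem_univ, true_and] at hz
      rw [Prod.ext_iff]
      exact ⟨hz.2.symm, rfl⟩
    · intro r _; rfl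
  have hpt : ∀ x : ZMod p, (univ.filter fun r : ZMod p => r^2 = x^2 - 4*A).card
      = (if x^2 - 4*A ≠ 0 ∧ IsSquare (x^2-4*A) then 2 else 0)
        + (if x^2 = 4*A then 1 else 0) := by
    intro x
    by_cases hz : x^2 = 4*A
    · have hD : x^2 - 4*A = 0 := by rw [hz]; ring
      rw [if_pos hz, if_neg (by simp [hD])]
      simp only [hD]
      rw [sqrt_card_zero]
    · have hD : x^2 - 4*A ≠ 0 := fun h => hz (by linear_combination h)
      rw [if_neg hz, add_zero]
      by_cases hs : IsSquare (x^2 - 4*A)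
      · rw [if_pos ⟨hD, hs⟩, sqrt_card_sq p hp2 hD hs]
      · rw [if_neg (by tauto), sqrt_card_ns p hs]
  have hsum : Pairs.card =
      2 * (univ.filter fun x : ZMod p => x^2 - 4*A ≠ 0 ∧ IsSquare (x^2-4*A)).card
      + (univ.filter fun x : ZMod p => x^2 = 4*A).card := by
    rw [hfib, Finset.sum_congr rfl (fun x _ => hpt x), Finset.sum_add_distrib]
    congr 1
    · rw [← Finset.sum_filter, Finset.sum_const, smul_eq_mul, mul_comm]
    · rw [← Finset.sum_filter, Finset.sum_const, smul_eq_mul, mul_one]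
  omega
end field2
open Finset







lemma nature_mul (p : ℕ) [hpf : Fact p.Prime] (hp2 : p ≠ 2) {x y : ZMod p} (hx : x ≠ 0)
    (hy : y ≠ 0) : IsSquare (x*y) ↔ (IsSquare x ↔ IsSquare y) := by
  by_cases h1 : IsSquare x <;> by_cases h2 : IsSquare y
  · exact iff_of_true (sq_mul_sq' p h1 h2) (by tauto)
  · exact iff_of_false (sq_mul_nonsq p h1 hx h2) (by tauto)
  · exact iff_of_false (by rw [mul_comm]; exact sq_mul_nonsq p h2 hy h1) (by tauto)
  · exact iff_of_true (nonsq_mul_nonsq p hp2 hx hy h1 h2) (by tauto)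

section cc
variable (p t : ℕ) [hpf : Fact p.Prime]

/-- Count of points `c ≡ 0 mod p` in `ZMod (p^t)` with `c(c+γ)` a square. -/
lemma class_count (hp2 : p ≠ 2) (ht : 1 ≤ t) (γ : ℤ) (hγ : ¬ (p:ℤ) ∣ γ) :
    (univ.filter fun c : ZMod (p^t) =>
        (∃ r : ZMod (p^t), r^2 = c^2 + (γ : ZMod (p^t)) * c) ∧ redn p t c = 0).card
      = 1 + ∑ j ∈ Icc 1 (t-1), (if Even j then
          (univ.filter fun w : ZMod p =>
            w ≠ 0 ∧ (IsSquare w ↔ IsSquare ((γ : ZMod p)))).card * p^(t-j-1) else 0) := by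
  classical
  have hp := hpf.out
  have hp0 : 0 < p := hp.pos
  haveI : NeZero p := ⟨hp0.ne'⟩
  haveI : NeZero (p^t) := ⟨pow_ne_zero _ hp0.ne'⟩
  have hγp : ((γ : ZMod p)) ≠ 0 := by
    rw [Ne, ZMod.intCast_zmod_eq_zero_iff_dvd]; exact hγ
  -- the key pointwise criterion
  have key : ∀ c : ZMod (p^t), c ≠ 0 → p ∣ c.val → ∀ j, (c.val).factorization p = j →
      1 ≤ j → j < t →
      ((∃ r : ZMod (p^t), r^2 = c^2 + (γ : ZMod (p^t)) * c) ↔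
        (Even j ∧ (IsSquare (((c.val / p^j : ℕ)) : ZMod p) ↔ IsSquare ((γ : ZMod p))))) := by
    intro c hc0 hdvd j hj hj1 hjt
    have hn0 : c.val ≠ 0 := fun h => hc0 ((ZMod.val_eq_zero c).mp h)
    set n := c.val with hn
    set w := n / p^j with hw
    have hnw : p^j * w = n := by
      rw [hw, ← hj]
      exact Nat.ordProj_mul_ordCompl_eq_self n p
    have hpw : ¬ p ∣ w := by
      rw [hw, ← hj]
      exact Nat.not_dvd_ordCompl hp hn0
    have hwbar : ((w : ℕ) : ZMod p) ≠ 0 := by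
      rw [Ne, ZMod.natCast_eq_zero_iff]; exact hpw
    set u : ℤ := (w : ℤ) * ((p:ℤ)^j * w + γ) with hu
    have hpu : ¬ (p:ℤ) ∣ u := by
      rw [hu]
      intro hd
      rcases (Int.Prime.dvd_mul' hp hd) with h' | h'
      · exact hpw (by exact_mod_cast h')
      · apply hγ
        have h2 : (p:ℤ) ∣ (p:ℤ)^j * w := dvd_mul_of_dvd_left (dvd_pow_self _ (by omega)) _
        have := dvd_sub h' h2
        simpa using this
    have hceq : c^2 + (γ : ZMod (p^t)) * c = (((p:ℤ)^j * u : ℤ) : ZMod (p^t)) := by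
      have h1 : ((p:ℤ)^j * u : ℤ) = (n:ℤ)^2 + γ * n := by
        rw [hu]
        have : ((n:ℤ)) = (p:ℤ)^j * w := by exact_mod_cast hnw.symm
        rw [this]; ring
      rw [h1]
      have hcn : ((n : ℕ) : ZMod (p^t)) = c := by rw [hn, ZMod.natCast_val, ZMod.cast_id]
      push_cast [hcn]
      try ring
    rw [hceq, sq_eq_pow_mul_iff p hp2 ht hjt hpu]
    constructor
    · rintro ⟨hev, hleg⟩
      refine ⟨hev, ?_⟩
      have hu0 : ((u:ℤ) : ZMod p) ≠ 0 := by
        rw [Ne, ZMod.intCast_zmod_eq_zero_iff_dvd]; exact hpu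
      rw [legendreSym.eq_one_iff p hu0] at hleg
      have hubar : ((u:ℤ) : ZMod p) = ((w:ℕ) : ZMod p) * ((γ : ZMod p)) := by
        rw [hu]
        push_cast
        rw [ZMod.natCast_self, zero_pow (by omega : j ≠ 0)]
        ring
      rw [hubar] at hleg
      exact (nature_mul p hp2 hwbar hγp).mp hleg
    · rintro ⟨hev, hiff⟩
      refine ⟨hev, ?_⟩
      have hu0 : ((u:ℤ) : ZMod p) ≠ 0 := by
        rw [Ne, ZMod.intCast_zmod_eq_zero_iff_dvd]; exact hpu
      rw [legendreSym.eq_one_iff p hu0]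
      have hubar : ((u:ℤ) : ZMod p) = ((w:ℕ) : ZMod p) * ((γ : ZMod p)) := by
        rw [hu]
        push_cast
        rw [ZMod.natCast_self, zero_pow (by omega : j ≠ 0)]
        ring
      rw [hubar]
      exact (nature_mul p hp2 hwbar hγp).mpr hiff
  -- split off c = 0
  set S := univ.filter fun c : ZMod (p^t) =>
      (∃ r : ZMod (p^t), r^2 = c^2 + (γ : ZMod (p^t)) * c) ∧ redn p t c = 0 with hS
  have h0S : (0 : ZMod (p^t)) ∈ S := by
    rw [hS, mem_filter]
    refine ⟨mem_univ _, ⟨0, by ring⟩, ?_⟩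
    unfold redn
    simp
  set S' := univ.filter (fun c : ZMod (p^t) =>
      ((∃ r : ZMod (p^t), r^2 = c^2 + (γ : ZMod (p^t)) * c) ∧ redn p t c = 0) ∧ c ≠ 0) with hS'
  have hES : S.erase 0 = S' := by
    ext c
    rw [Finset.mem_erase, hS', hS]
    simp only [mem_filter, mem_univ, true_and]
    tauto
  have hSplit : S.card = 1 + S'.card := by
    rw [← Finset.card_erase_add_one h0S, hES, add_comm]
  rw [hSplit]
  congr 1
  -- fiberwise over the valuation
  have hfib : ∀ c ∈ S', (c.val).factorization p ∈ Icc 1 (t-1) := by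
    intro c hc
    rw [hS', mem_filter] at hc
    obtain ⟨-, ⟨-, hred⟩, hc0⟩ := hc
    have hn0 : c.val ≠ 0 := fun h => hc0 ((ZMod.val_eq_zero c).mp h)
    have hdvd : p ∣ c.val := by
      unfold redn at hred
      rwa [ZMod.natCast_eq_zero_iff] at hred
    have h1 : 1 ≤ (c.val).factorization p := hp.factorization_pos_of_dvd hn0 hdvd
    have h2 : (c.val).factorization p < t := by
      have hd : p ^ ((c.val).factorization p) ∣ c.val := Nat.ordProj_dvd _ _
      have hle : p ^ ((c.val).factorization p) ≤ c.val := Nat.le_of_dvd (Nat.pos_of_ne_zero hn0) hd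
      have hlt : c.val < p^t := ZMod.val_lt c
      have := lt_of_le_of_lt hle hlt
      exact (Nat.pow_lt_pow_iff_right hp.one_lt).mp this
    simp only [mem_Icc]
    omega
  rw [Finset.card_eq_sum_card_fiberwise hfib]
  apply Finset.sum_congr rfl
  intro j hj
  simp only [mem_Icc] at hj
  have hj1 : 1 ≤ j := hj.1
  have hjt : j < t := by omega
  by_cases hev : Even j
  · rw [if_pos hev]
    -- bijection with ZMod (p^(t-j))
    haveI : NeZero (p^(t-j)) := ⟨pow_ne_zero _ hp0.ne'⟩
    have htj : 1 ≤ t - j := by omega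
    rw [← card_red_filter p (t-j) hp0 htj
      (fun x : ZMod p => x ≠ 0 ∧ (IsSquare x ↔ IsSquare ((γ : ZMod p))))]
    have hptj : p^j * p^(t-j) = p^t := by
      rw [← pow_add]; congr 1; omega
    apply Finset.card_nbij' (i := fun c => ((c.val / p^j : ℕ) : ZMod (p^(t-j))))
      (j := fun w' => ((p^j * w'.val : ℕ) : ZMod (p^t)))
    · -- forward membership
      intro c hc
      rw [mem_coe, mem_filter, hS', mem_filter] at hc
      obtain ⟨⟨-, ⟨hex, hred⟩, hc0⟩, hfj⟩ := hc
      have hdvd : p ∣ c.val := by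
        unfold redn at hred; rwa [ZMod.natCast_eq_zero_iff] at hred
      have hn0 : c.val ≠ 0 := fun h => hc0 ((ZMod.val_eq_zero c).mp h)
      have hnw : p^j * (c.val / p^j) = c.val := by
        rw [← hfj]; exact Nat.ordProj_mul_ordCompl_eq_self _ p
      have hpw : ¬ p ∣ (c.val / p^j) := by
        rw [← hfj]; exact Nat.not_dvd_ordCompl hp hn0
      have hwlt : c.val / p^j < p^(t-j) := by
        have h1 : p^j * (c.val / p^j) < p^j * p^(t-j) := by
          rw [hnw, hptj]; exact ZMod.val_lt c
        exact lt_of_mul_lt_mul_left h1 (Nat.zero_le _)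
      rw [mem_coe, mem_filter]
      refine ⟨mem_univ _, ?_, ?_⟩
      · unfold redn
        rw [ZMod.val_cast_of_lt hwlt, Ne, ZMod.natCast_eq_zero_iff]
        exact hpw
      · unfold redn
        rw [ZMod.val_cast_of_lt hwlt]
        exact ((key c hc0 hdvd j hfj hj1 hjt).mp hex).2
    · -- backward membership
      intro w' hw'
      rw [mem_coe, mem_filter] at hw'
      obtain ⟨-, hw0, hwiff⟩ := hw'
      have hvlt : w'.val < p^(t-j) := ZMod.val_lt w'
      have hclt : p^j * w'.val < p^t := by
        rw [← hptj]
        exact (Nat.mul_lt_mul_left (pow_pos hp0 j)).mpr hvlt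
      have hcval : ((p^j * w'.val : ℕ) : ZMod (p^t)).val = p^j * w'.val :=
        ZMod.val_cast_of_lt hclt
      have hwv0 : ¬ p ∣ w'.val := by
        unfold redn at hw0
        rwa [Ne, ZMod.natCast_eq_zero_iff] at hw0
      have hwv0' : w'.val ≠ 0 := fun h => hwv0 (h ▸ dvd_zero p)
      have hfj : (((p^j * w'.val : ℕ) : ZMod (p^t)).val).factorization p = j := by
        rw [hcval, Nat.factorization_mul (pow_ne_zero _ hp0.ne') hwv0']
        simp [Nat.Prime.factorization_pow hp, Nat.factorization_eq_zero_of_not_dvd hwv0]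
      have hc0 : ((p^j * w'.val : ℕ) : ZMod (p^t)) ≠ 0 := by
        intro h
        rw [← ZMod.val_eq_zero, hcval] at h
        exact hwv0' (by
          rcases Nat.mul_eq_zero.mp h with h' | h'
          · exact absurd h' (pow_ne_zero _ hp0.ne')
          · exact h')
      have hdvd : p ∣ ((p^j * w'.val : ℕ) : ZMod (p^t)).val := by
        rw [hcval]
        exact dvd_mul_of_dvd_left (dvd_pow_self p (by omega)) _
      have hred : redn p t ((p^j * w'.val : ℕ) : ZMod (p^t)) = 0 := by
        unfold redn
        rwa [ZMod.natCast_eq_zero_iff]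
      have hdiv : ((p^j * w'.val : ℕ) : ZMod (p^t)).val / p^j = w'.val := by
        rw [hcval, Nat.mul_div_cancel_left _ (pow_pos hp0 j)]
      have hex : ∃ r : ZMod (p^t), r^2 = ((p^j * w'.val : ℕ) : ZMod (p^t))^2
          + (γ : ZMod (p^t)) * ((p^j * w'.val : ℕ) : ZMod (p^t)) := by
        apply (key _ hc0 hdvd j hfj hj1 hjt).mpr
        refine ⟨hev, ?_⟩
        rw [hdiv]
        exact hwiff
      rw [mem_coe, mem_filter, hS', mem_filter]
      exact ⟨⟨mem_univ _, ⟨hex, hred⟩, hc0⟩, hfj⟩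
    · -- left inverse
      intro c hc
      rw [mem_coe, mem_filter, hS', mem_filter] at hc
      obtain ⟨⟨-, ⟨hex, hred⟩, hc0⟩, hfj⟩ := hc
      have hn0 : c.val ≠ 0 := fun h => hc0 ((ZMod.val_eq_zero c).mp h)
      have hnw : p^j * (c.val / p^j) = c.val := by
        rw [← hfj]; exact Nat.ordProj_mul_ordCompl_eq_self _ p
      have hwlt : c.val / p^j < p^(t-j) := by
        have h1 : p^j * (c.val / p^j) < p^j * p^(t-j) := by
          rw [hnw, hptj]; exact ZMod.val_lt c
        exact lt_of_mul_lt_mul_left h1 (Nat.zero_le _)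
      beta_reduce
      rw [ZMod.val_cast_of_lt hwlt, hnw, ZMod.natCast_val, ZMod.cast_id]
    · -- right inverse
      intro w' hw'
      have hvlt : w'.val < p^(t-j) := ZMod.val_lt w'
      have hclt : p^j * w'.val < p^t := by
        rw [← hptj]
        exact (Nat.mul_lt_mul_left (pow_pos hp0 j)).mpr hvlt
      beta_reduce
      rw [ZMod.val_cast_of_lt hclt, Nat.mul_div_cancel_left _ (pow_pos hp0 j),
        ZMod.natCast_val, ZMod.cast_id]
  · rw [if_neg hev]
    rw [Finset.card_eq_zero, Finset.filter_eq_empty_iff]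
    intro c hc
    rw [hS', mem_filter] at hc
    obtain ⟨-, ⟨hex, hred⟩, hc0⟩ := hc
    intro hfj
    have hdvd : p ∣ c.val := by
      unfold redn at hred
      rwa [ZMod.natCast_eq_zero_iff] at hred
    have := (key c hc0 hdvd j hfj hj1 hjt).mp hex
    exact hev this.1
end cc
open Finset

lemma qsum (p : ℕ) (hp : 2 ≤ p) : ∀ m : ℕ,
    2 + ∑ j ∈ Icc 1 m, (if Even j then ((p:ℚ)-1) * (p:ℚ)^(m-j) else 0)
      = (p:ℚ)^m/((p:ℚ)+1) + 3/2 + (-1:ℚ)^m * ((p:ℚ)-1)/(2*((p:ℚ)+1)) := by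
  have hp1 : ((p:ℚ)+1) ≠ 0 := by positivity
  intro m
  induction m with
  | zero =>
    rw [show Icc 1 0 = (∅ : Finset ℕ) from rfl, Finset.sum_empty, pow_zero, pow_zero]
    field_simp
    ring
  | succ m ih =>
    rw [Finset.sum_Icc_succ_top (by omega : 1 ≤ m+1)]
    have hstep : ∑ j ∈ Icc 1 m, (if Even j then ((p:ℚ)-1) * (p:ℚ)^(m+1-j) else 0)
        = (p:ℚ) * ∑ j ∈ Icc 1 m, (if Even j then ((p:ℚ)-1) * (p:ℚ)^(m-j) else 0) := by
      rw [Finset.mul_sum]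
      apply Finset.sum_congr rfl
      intro j hj
      simp only [mem_Icc] at hj
      have : m + 1 - j = (m - j) + 1 := by omega
      rw [this]
      by_cases h : Even j
      · rw [if_pos h, if_pos h, pow_succ]; ring
      · rw [if_neg h, if_neg h, mul_zero]
    rw [hstep]
    have ihs : ∑ j ∈ Icc 1 m, (if Even j then ((p:ℚ)-1) * (p:ℚ)^(m-j) else 0)
        = (p:ℚ)^m/((p:ℚ)+1) + 3/2 + (-1:ℚ)^m * ((p:ℚ)-1)/(2*((p:ℚ)+1)) - 2 := by
      linarith [ih]
    rw [ihs]
    rcases Nat.even_or_odd (m+1) with he | ho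
    · rw [if_pos he, he.neg_one_pow]
      have hom : (-1:ℚ)^m = -1 := by
        rcases Nat.even_or_odd m with h | h
        · exfalso; exact (Nat.even_add_one.mp he) h
        · exact h.neg_one_pow
      rw [hom, Nat.sub_self, pow_zero, pow_succ]
      field_simp
      ring
    · rw [if_neg (by simpa using ho), ho.neg_one_pow]
      have hom : (-1:ℚ)^m = 1 := by
        rcases Nat.even_or_odd m with h | h
        · exact h.neg_one_pow
        · exfalso
          rcases ho with ⟨k, hk⟩
          rcases h with ⟨l, hl⟩
          omega
      rw [hom, pow_succ]
      field_simp
      ring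
open Finset


section red
variable (p t : ℕ) [hpf : Fact p.Prime]

lemma unit_of_coprime' (a : ℤ) (q : ℕ) (ha : IsCoprime a (q:ℤ)) : IsUnit ((a : ZMod q)) := by
  obtain ⟨u, v, huv⟩ := ha
  apply IsUnit.of_mul_eq_one ((u : ZMod q))
  have : ((u*a + v*q : ℤ) : ZMod q) = ((1:ℤ) : ZMod q) := by rw [huv]
  push_cast at this
  rw [ZMod.natCast_self] at this
  rw [mul_comm]
  simpa using this

lemma coordSumset_eq (hp2 : p ≠ 2) (ht : 1 ≤ t) (a : ℤ) (ha : IsCoprime a (p:ℤ)) :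
    coordSumset a (p^t) = ↑(univ.filter fun s : ZMod (p^t) =>
      ∃ r : ZMod (p^t), r^2 = s^2 - 4*((a : ZMod (p^t)))) := by
  classical
  have hp := hpf.out
  have hp0 : 0 < p := hp.pos
  haveI : NeZero p := ⟨hp0.ne'⟩
  haveI : NeZero (p^t) := ⟨pow_ne_zero _ hp0.ne'⟩
  have hq1 : 1 < p^t := by
    calc 1 < p := hp.one_lt
    _ = p^1 := (pow_one p).symm
    _ ≤ p^t := Nat.pow_le_pow_right hp0 ht
  haveI : Nontrivial (ZMod (p^t)) := ZMod.nontrivial_iff.mpr (by omega)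
  have haq : IsCoprime a ((p^t : ℕ) : ℤ) := by
    push_cast
    exact ha.pow_right
  have haU : IsUnit ((a : ZMod (p^t))) := unit_of_coprime' a (p^t) haq
  have h2U : IsUnit ((2 : ZMod (p^t))) := by
    have : ((2:ℕ) : ZMod (p^t)) = (2 : ZMod (p^t)) := by norm_num
    rw [← this, ZMod.isUnit_iff_coprime]
    apply Nat.Coprime.pow_right
    rw [Nat.coprime_primes Nat.prime_two hp]
    exact fun h => hp2 h.symm
  ext s
  simp only [Set.mem_setOf_eq, coordSumset, Finset.coe_filter, Set.mem_setOf_eq, mem_univ,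
    true_and]
  constructor
  · rintro ⟨x, y, hxy, hx1, hxq, hy1, hyq, hs⟩
    refine ⟨(x : ZMod (p^t)) - (y : ZMod (p^t)), ?_⟩
    have hxyz : ((x : ZMod (p^t))) * ((y : ZMod (p^t))) = ((a : ZMod (p^t))) := by
      have := (ZMod.intCast_eq_intCast_iff _ _ _).mpr hxy
      push_cast at this
      exact this
    rw [hs]
    push_cast
    linear_combination -4*hxyz
  · rintro ⟨r, hr⟩
    set X := (s + r) * (2 : ZMod (p^t))⁻¹ with hX
    set Y := (s - r) * (2 : ZMod (p^t))⁻¹ with hY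
    have h22 : (2 : ZMod (p^t)) * (2 : ZMod (p^t))⁻¹ = 1 := ZMod.mul_inv_of_unit _ h2U
    have hXY : X * Y = ((a : ZMod (p^t))) := by
      have h4 : (s^2 - r^2) = 4*((a : ZMod (p^t))) := by linear_combination -hr
      have : X * Y * (2*2) = ((a : ZMod (p^t))) * (2*2) := by
        rw [hX, hY]
        have e1 : (s + r) * (2:ZMod (p^t))⁻¹ * ((s - r) * (2:ZMod (p^t))⁻¹) * (2*2)
            = (s^2 - r^2) * ((2 * (2:ZMod (p^t))⁻¹) * (2 * (2:ZMod (p^t))⁻¹)) := by ring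
        rw [e1, h22, h4]
        ring
      have h4U : IsUnit ((2:ZMod (p^t)) * 2) := h2U.mul h2U
      exact h4U.mul_right_cancel this
    have hXs : X + Y = s := by
      have : X + Y = s * (2 * (2:ZMod (p^t))⁻¹) := by rw [hX, hY]; ring
      rw [this, h22, mul_one]
    have hXU : IsUnit X := isUnit_of_mul_isUnit_left (hXY ▸ haU)
    have hYU : IsUnit Y := isUnit_of_mul_isUnit_right (hXY ▸ haU)
    have hX0 : X ≠ 0 := hXU.ne_zero
    have hY0 : Y ≠ 0 := hYU.ne_zero
    refine ⟨(X.val : ℤ), (Y.val : ℤ), ?_, ?_, ?_, ?_, ?_, ?_⟩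
    · rw [← ZMod.intCast_eq_intCast_iff]
      push_cast
      rw [ZMod.natCast_val, ZMod.cast_id, ZMod.natCast_val, ZMod.cast_id, hXY]
    · have : X.val ≠ 0 := fun h => hX0 ((ZMod.val_eq_zero X).mp h)
      omega
    · have := ZMod.val_lt X
      exact_mod_cast this
    · have : Y.val ≠ 0 := fun h => hY0 ((ZMod.val_eq_zero Y).mp h)
      omega
    · have := ZMod.val_lt Y
      exact_mod_cast this
    · rw [← hXs]
      push_cast
      rw [ZMod.natCast_val, ZMod.cast_id, ZMod.natCast_val, ZMod.cast_id]
end red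
section main
variable (p t : ℕ) [hpf : Fact p.Prime]

lemma not_dvd_four (hp2 : p ≠ 2) : ¬ (p:ℤ) ∣ 4 := by
  have hp := hpf.out
  intro hd
  have h4 : p ∣ (4:ℤ).natAbs := Int.natCast_dvd_natCast.mp (by simpa using hd)
  have : p ∣ 2^2 := by norm_num at h4 ⊢; exact h4
  exact hp2 ((Nat.prime_dvd_prime_iff_eq hp Nat.prime_two).mp (hp.dvd_of_dvd_pow this))

lemma root_class_card (hp2 : p ≠ 2) (ht : 1 ≤ t) (a B : ℤ)
    (hB : ((p^t : ℕ) : ℤ) ∣ B^2 - a) (hpB : ¬ (p:ℤ) ∣ B) :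
    (univ.filter fun s : ZMod (p^t) =>
        (∃ r : ZMod (p^t), r^2 = s^2 - 4*((a : ZMod (p^t))))
        ∧ redn p t s = ((2*B : ℤ) : ZMod p)).card
      = 1 + ∑ j ∈ Icc 1 (t-1), (if Even j then
          (univ.filter fun w : ZMod p =>
            w ≠ 0 ∧ (IsSquare w ↔ IsSquare (((4*B : ℤ) : ZMod p)))).card * p^(t-j-1) else 0) := by
  classical
  have hp := hpf.out
  have hp0 : 0 < p := hp.pos
  haveI : NeZero p := ⟨hp0.ne'⟩
  haveI : NeZero (p^t) := ⟨pow_ne_zero _ hp0.ne'⟩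
  have hγ : ¬ (p:ℤ) ∣ 4*B := by
    intro hd
    rcases (Int.Prime.dvd_mul' hp hd) with h' | h'
    · exact not_dvd_four p hp2 (by exact_mod_cast h')
    · exact hpB h'
  rw [← class_count p t hp2 ht (4*B) hγ]
  have hredhom : ∀ z : ZMod (p^t),
      redn p t z = ZMod.castHom (dvd_pow_self p (by omega : t ≠ 0)) (ZMod p) z := by
    intro z
    unfold redn
    rw [ZMod.castHom_apply, ZMod.natCast_val]
  have h0 : ((4*(B^2 - a) : ℤ) : ZMod (p^t)) = 0 := by
    rw [ZMod.intCast_zmod_eq_zero_iff_dvd]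
    exact Dvd.dvd.mul_left hB 4
  have hid : ∀ s : ZMod (p^t), s^2 - 4*((a : ZMod (p^t)))
      = (s - ((2*B : ℤ) : ZMod (p^t)))^2
        + ((4*B : ℤ) : ZMod (p^t)) * (s - ((2*B : ℤ) : ZMod (p^t))) := by
    intro s
    push_cast at h0 ⊢
    linear_combination h0
  have hred2 : ∀ s : ZMod (p^t),
      redn p t (s - ((2*B : ℤ) : ZMod (p^t))) = redn p t s - ((2*B : ℤ) : ZMod p) := by
    intro s
    rw [hredhom, hredhom, map_sub, map_intCast]
  apply Finset.card_nbij' (i := fun s => s - ((2*B:ℤ) : ZMod (p^t)))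
    (j := fun c => c + ((2*B:ℤ) : ZMod (p^t)))
  · intro s hs
    rw [mem_coe, mem_filter] at hs ⊢
    obtain ⟨-, ⟨r, hr⟩, hredn⟩ := hs
    refine ⟨mem_univ _, ⟨r, ?_⟩, ?_⟩
    · rw [hr, hid]
    · rw [hred2, hredn, sub_self]
  · intro c hc
    rw [mem_coe, mem_filter] at hc ⊢
    obtain ⟨-, ⟨r, hr⟩, hredn⟩ := hc
    refine ⟨mem_univ _, ⟨r, ?_⟩, ?_⟩
    · rw [hr, hid]
      ring_nf
    · have := hred2 (c + ((2*B:ℤ) : ZMod (p^t)))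
      rw [add_sub_cancel_right] at this
      rw [← sub_eq_zero, ← this, hredn]
  · intro s _; beta_reduce; rw [sub_add_cancel]
  · intro c _; beta_reduce; rw [add_sub_cancel_right]
end main

theorem stmt9 (p : ℕ) [hp : Fact p.Prime] (hp2 : p ≠ 2) (t : ℕ) (ht : 1 ≤ t)
    (a : ℤ) (ha : IsCoprime a (p : ℤ)) :
    (legendreSym p a = 1 →
      ((coordSumset a (p ^ t)).ncard : ℚ) =
        ((p : ℚ) - 3) * (p : ℚ) ^ (t - 1) / 2 + (p : ℚ) ^ (t - 1) / ((p : ℚ) + 1) + 3 / 2 +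
          (-1 : ℚ) ^ (t - 1) * ((p : ℚ) - 1) / (2 * ((p : ℚ) + 1))) ∧
    (legendreSym p a = -1 →
      ((coordSumset a (p ^ t)).ncard : ℚ) = (Nat.totient (p ^ t) : ℚ) / 2) := by
  classical
  have hpp := hp.out
  have hp0 : 0 < p := hpp.pos
  haveI : NeZero p := ⟨hp0.ne'⟩
  haveI : NeZero (p^t) := ⟨pow_ne_zero _ hp0.ne'⟩
  have hpa : ¬ (p:ℤ) ∣ a := by
    intro hd
    obtain ⟨u, v, huv⟩ := ha
    have : (p:ℤ) ∣ 1 := by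
      rw [← huv]
      exact dvd_add (Dvd.dvd.mul_left hd u) (Dvd.dvd.mul_left dvd_rfl v)
    have := Int.le_of_dvd (by norm_num) this
    have : (2:ℤ) ≤ p := by exact_mod_cast hpp.two_le
    omega
  have ha0 : ((a : ZMod p)) ≠ 0 := by
    rw [Ne, ZMod.intCast_zmod_eq_zero_iff_dvd]; exact hpa
  rw [coordSumset_eq p t hp2 ht a ha, Set.ncard_coe_finset]
  -- master decomposition
  set cond : ZMod (p^t) → Prop :=
    fun s => ∃ r : ZMod (p^t), r^2 = s^2 - 4*((a : ZMod (p^t))) with hcond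
  have hmaster : (univ.filter cond).card
      = ∑ x : ZMod p, (univ.filter fun s => cond s ∧ redn p t s = x).card := by
    rw [Finset.card_eq_sum_card_fiberwise (f := redn p t) (t := univ) (fun s _ => mem_univ _)]
    apply Finset.sum_congr rfl
    intro x _
    rw [Finset.filter_filter]
  -- unit-discriminant classes
  have hx_unit : ∀ x : ZMod p, x^2 - 4*((a : ZMod p)) ≠ 0 →
      (univ.filter fun s => cond s ∧ redn p t s = x).card
        = if (x^2 - 4*((a : ZMod p)) ≠ 0 ∧ IsSquare (x^2 - 4*((a : ZMod p))))
            then p^(t-1) else 0 := by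
    intro x hx
    have hcnd : ∀ s : ZMod (p^t), redn p t s = x →
        (cond s ↔ (x^2 - 4*((a : ZMod p)) ≠ 0 ∧ IsSquare (x^2 - 4*((a : ZMod p))))) := by
      intro s hs
      set u : ℤ := (s.val : ℤ)^2 - 4*a with hu
      have hubar : ((u : ℤ) : ZMod p) = x^2 - 4*((a : ZMod p)) := by
        rw [hu, ← hs]
        unfold redn
        push_cast
        ring
      have hpu : ¬ (p:ℤ) ∣ u := by
        rw [← ZMod.intCast_zmod_eq_zero_iff_dvd, hubar]
        exact hx
      have hsu : s^2 - 4*((a : ZMod (p^t))) = ((u : ℤ) : ZMod (p^t)) := by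
        rw [hu]
        push_cast
        rw [ZMod.natCast_val, ZMod.cast_id]
      have hiff := sq_eq_pow_mul_iff p hp2 ht (j := 0) (by omega) hpu
      have hcast : (((p:ℤ)^0 * u : ℤ) : ZMod (p^t)) = ((u : ℤ) : ZMod (p^t)) := by
        norm_num
      rw [hcast] at hiff
      rw [hcond]
      simp only [hsu]
      rw [hiff]
      have hu0 : ((u : ℤ) : ZMod p) ≠ 0 := by rw [hubar]; exact hx
      rw [legendreSym.eq_one_iff p hu0, hubar]
      constructor
      · rintro ⟨-, h⟩; exact ⟨hx, h⟩
      · rintro ⟨-, h⟩; exact ⟨Even.zero, h⟩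
    by_cases hP : (x^2 - 4*((a : ZMod p)) ≠ 0 ∧ IsSquare (x^2 - 4*((a : ZMod p))))
    · rw [if_pos hP]
      rw [show (univ.filter fun s => cond s ∧ redn p t s = x)
          = univ.filter (fun s => redn p t s = x) by
        ext s
        simp only [mem_filter, mem_univ, true_and]
        constructor
        · tauto
        · intro h; exact ⟨(hcnd s h).mpr hP, h⟩]
      exact card_fiber p t hp0 ht x
    · rw [if_neg hP, Finset.card_eq_zero, Finset.filter_eq_empty_iff]
      intro s _
      rw [not_and]
      intro hc hr
      exact hP ((hcnd s hr).mp hc)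
  constructor
  · -- legendre = 1
    intro hleg
    have hsqa : IsSquare ((a : ZMod p)) := (legendreSym.eq_one_iff p ha0).mp hleg
    obtain ⟨d, hd⟩ := hsqa
    have hd0 : d ≠ 0 := fun h => ha0 (by rw [hd, h, mul_zero])
    have h1 : ∃ r : ℤ, (p:ℤ) ∣ r^2 - a := by
      refine ⟨(d.val : ℤ), ?_⟩
      rw [← ZMod.intCast_zmod_eq_zero_iff_dvd]
      push_cast
      rw [ZMod.natCast_val, ZMod.cast_id, hd, sq]
      ring
    obtain ⟨B, hB⟩ := hensel_sq p hpp hp2 a hpa h1 (t-1)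
    rw [show t - 1 + 1 = t by omega] at hB
    have hBq : ((p^t : ℕ) : ℤ) ∣ B^2 - a := by push_cast; exact hB
    have hBp : (p:ℤ) ∣ B^2 - a := by
      refine dvd_trans ?_ hB
      exact dvd_pow_self _ (by omega)
    have hpB : ¬ (p:ℤ) ∣ B := by
      intro hdv
      apply hpa
      have h2 : (p:ℤ) ∣ B^2 := by rw [sq]; exact hdv.mul_right B
      have := dvd_sub h2 hBp
      simpa using this
    -- the two roots
    set x₁ : ZMod p := ((2*B : ℤ) : ZMod p) with hx₁
    have hBbar : ((B : ℤ) : ZMod p) ≠ 0 := by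
      rw [Ne, ZMod.intCast_zmod_eq_zero_iff_dvd]; exact hpB
    have h2z : (2 : ZMod p) ≠ 0 := two_ne_zero'' p hp2
    have hx₁0 : x₁ ≠ 0 := by
      rw [hx₁]
      push_cast
      exact mul_ne_zero h2z hBbar
    have hx₁sq : x₁^2 - 4*((a : ZMod p)) = 0 := by
      rw [hx₁]
      have : (((4*(B^2 - a)) : ℤ) : ZMod p) = 0 := by
        rw [ZMod.intCast_zmod_eq_zero_iff_dvd]
        exact Dvd.dvd.mul_left hBp 4
      push_cast at this ⊢
      linear_combination this
    have hx₁₂ : x₁ ≠ -x₁ := by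
      intro h
      apply hx₁0
      have h2x : (2 : ZMod p) * x₁ = 0 := by linear_combination h
      rcases mul_eq_zero.mp h2x with h' | h'
      · exact absurd h' h2z
      · exact h'
    have hZ : (univ.filter fun x : ZMod p => x^2 - 4*((a : ZMod p)) = 0) = {x₁, -x₁} := by
      ext x
      simp only [mem_filter, mem_univ, true_and, mem_insert, mem_singleton]
      constructor
      · intro hxx
        have hfac : (x - x₁) * (x + x₁) = 0 := by linear_combination hxx - hx₁sq
        rcases mul_eq_zero.mp hfac with h' | h'
        · left; linear_combination h'
        · right; linear_combination h'
      · rintro (rfl | rfl)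
        · exact hx₁sq
        · linear_combination hx₁sq
    -- split the master sum
    rw [hmaster, ← Finset.sum_filter_add_sum_filter_not univ
      (fun x : ZMod p => x^2 - 4*((a : ZMod p)) = 0)]
    -- second part
    have hsecond : ∑ x ∈ univ.filter (fun x : ZMod p => ¬ x^2 - 4*((a : ZMod p)) = 0),
        (univ.filter fun s => cond s ∧ redn p t s = x).card
        = (univ.filter fun x : ZMod p =>
            x^2 - 4*((a : ZMod p)) ≠ 0 ∧ IsSquare (x^2 - 4*((a : ZMod p)))).card * p^(t-1) := by
      rw [Finset.sum_congr rfl (fun x hx => hx_unit x (mem_filter.mp hx).2)]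
      rw [← Finset.sum_filter]
      rw [Finset.filter_filter]
      rw [show (univ.filter fun x : ZMod p => (¬ x^2 - 4*((a : ZMod p)) = 0) ∧
          (x^2 - 4*((a : ZMod p)) ≠ 0 ∧ IsSquare (x^2 - 4*((a : ZMod p)))))
          = univ.filter (fun x : ZMod p =>
            x^2 - 4*((a : ZMod p)) ≠ 0 ∧ IsSquare (x^2 - 4*((a : ZMod p)))) by
        ext x
        simp only [mem_filter, mem_univ, true_and]
        tauto]
      rw [Finset.sum_const, smul_eq_mul]
    rw [hsecond, hZ, Finset.sum_pair hx₁₂]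
    -- first class
    have hc1 := root_class_card p t hp2 ht a B hBq hpB
    have hc2 := root_class_card p t hp2 ht a (-B)
      (by have hnn : (-B)^2 - a = B^2 - a := by ring
          rw [hnn]; exact hBq)
      (by rwa [dvd_neg])
    rw [show ((2*(-B) : ℤ) : ZMod p) = -x₁ by rw [hx₁]; push_cast; ring] at hc2
    rw [hc1, hc2]
    -- counts of quadratic natures
    set M₁ := (univ.filter fun w : ZMod p =>
      w ≠ 0 ∧ (IsSquare w ↔ IsSquare (((4*B : ℤ) : ZMod p)))).card with hM₁
    set M₂ := (univ.filter fun w : ZMod p =>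
      w ≠ 0 ∧ (IsSquare w ↔ IsSquare (((4*(-B) : ℤ) : ZMod p)))).card with hM₂
    have hγ1 : (((4*B : ℤ) : ZMod p)) ≠ 0 := by
      rw [Ne, ZMod.intCast_zmod_eq_zero_iff_dvd]
      intro hdv
      rcases (Int.Prime.dvd_mul' hpp hdv) with h' | h'
      · exact not_dvd_four p hp2 (by exact_mod_cast h')
      · exact hpB h'
    have hγ2 : (((4*(-B) : ℤ) : ZMod p)) ≠ 0 := by
      have : ((4*(-B) : ℤ) : ZMod p) = -(((4*B : ℤ) : ZMod p)) := by push_cast; ring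
      rw [this, neg_ne_zero]
      exact hγ1
    have hM₁v : 2 * M₁ + 1 = p := card_same_nature p hp2 _ hγ1
    have hM₂v : 2 * M₂ + 1 = p := card_same_nature p hp2 _ hγ2
    -- field count
    have hZcard : (univ.filter fun x : ZMod p => x^2 = 4*((a : ZMod p))).card = 2 := by
      rw [show (univ.filter fun x : ZMod p => x^2 = 4*((a : ZMod p)))
          = univ.filter (fun x : ZMod p => x^2 - 4*((a : ZMod p)) = 0) by
        ext x
        simp only [mem_filter, mem_univ, true_and, sub_eq_zero]]
      rw [hZ, Finset.card_insert_of_notMem (by simpa using hx₁₂), card_singleton]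
    have hfc := field_count p hp2 ((a : ZMod p)) ha0
    rw [hZcard] at hfc
    set P₁ := (univ.filter fun x : ZMod p =>
      x^2 - 4*((a : ZMod p)) ≠ 0 ∧ IsSquare (x^2 - 4*((a : ZMod p)))).card with hP₁
    -- now pure rational arithmetic
    have hM₁q : ((M₁:ℕ):ℚ) = ((p:ℚ)-1)/2 := by
      have h := congrArg (fun n : ℕ => (n:ℚ)) hM₁v
      push_cast at h
      linarith
    have hM₂q : ((M₂:ℕ):ℚ) = ((p:ℚ)-1)/2 := by
      have h := congrArg (fun n : ℕ => (n:ℚ)) hM₂v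
      push_cast at h
      linarith
    have hP₁q : ((P₁:ℕ):ℚ) = ((p:ℚ)-3)/2 := by
      have h := congrArg (fun n : ℕ => (n:ℚ)) hfc
      push_cast at h
      linarith
    have hsum1 : ∀ (M : ℕ), ((∑ j ∈ Icc 1 (t-1), (if Even j then M * p^(t-j-1) else 0) : ℕ) : ℚ)
        = ∑ j ∈ Icc 1 (t-1), (if Even j then (M:ℚ) * (p:ℚ)^(t-1-j) else 0) := by
      intro M
      rw [Nat.cast_sum]
      apply Finset.sum_congr rfl
      intro j hj
      simp only [mem_Icc] at hj
      rw [show t - j - 1 = t - 1 - j by omega]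
      split <;> push_cast <;> ring
    have hcomb : (∑ j ∈ Icc 1 (t-1), (if Even j then ((M₁:ℕ):ℚ) * (p:ℚ)^(t-1-j) else 0))
        + (∑ j ∈ Icc 1 (t-1), (if Even j then ((M₂:ℕ):ℚ) * (p:ℚ)^(t-1-j) else 0))
        = ∑ j ∈ Icc 1 (t-1), (if Even j then ((p:ℚ)-1) * (p:ℚ)^(t-1-j) else 0) := by
      rw [← Finset.sum_add_distrib]
      apply Finset.sum_congr rfl
      intro j _
      split
      · rw [hM₁q, hM₂q]; ring
      · ring
    have hq := qsum p hpp.two_le (t-1)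
    rw [Nat.cast_add, Nat.cast_add, Nat.cast_add, Nat.cast_add, Nat.cast_mul, Nat.cast_one,
      Nat.cast_pow, hsum1 M₁, hsum1 M₂, hP₁q]
    linarith [hq, hcomb]
  · -- legendre = -1
    intro hleg
    have hnsq : ¬ IsSquare ((a : ZMod p)) := by
      intro h
      rw [← legendreSym.eq_one_iff p ha0] at h
      omega
    have hD : ∀ x : ZMod p, x^2 - 4*((a : ZMod p)) ≠ 0 := by
      intro x hx
      apply hnsq
      refine ⟨x * (2 : ZMod p)⁻¹, ?_⟩
      have h2z : (2 : ZMod p) ≠ 0 := two_ne_zero'' p hp2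
      have hx4 : x^2 = 4*((a : ZMod p)) := by linear_combination hx
      have h22 : (2:ZMod p) * (2:ZMod p)⁻¹ = 1 := mul_inv_cancel₀ h2z
      calc (a : ZMod p) = (a : ZMod p) * (((2:ZMod p) * (2:ZMod p)⁻¹))^2 := by rw [h22]; ring
        _ = x * (2:ZMod p)⁻¹ * (x * (2:ZMod p)⁻¹) := by
            linear_combination (-((2:ZMod p)⁻¹)^2) * hx4
    rw [hmaster]
    rw [Finset.sum_congr rfl (fun x _ => hx_unit x (hD x))]
    rw [← Finset.sum_filter, Finset.sum_const, smul_eq_mul]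
    have hZcard : (univ.filter fun x : ZMod p => x^2 = 4*((a : ZMod p))).card = 0 := by
      rw [Finset.card_eq_zero, Finset.filter_eq_empty_iff]
      intro x _ hx
      exact hD x (by rw [hx]; ring)
    have hfc := field_count p hp2 ((a : ZMod p)) ha0
    rw [hZcard] at hfc
    have hnat : 2 * ((univ.filter fun x : ZMod p =>
        x^2 - 4*((a : ZMod p)) ≠ 0 ∧ IsSquare (x^2 - 4*((a : ZMod p)))).card * p^(t-1))
        = Nat.totient (p^t) := by
      rw [Nat.totient_prime_pow hpp (by omega)]
      have h2c : 2 * (univ.filter fun x : ZMod p =>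
          x^2 - 4*((a : ZMod p)) ≠ 0 ∧ IsSquare (x^2 - 4*((a : ZMod p)))).card = p - 1 := by
        omega
      rw [← mul_assoc, h2c, mul_comm]
    rw [← hnat]
    push_cast
    ring
end

section
/- Let p be a prime with p ≡ 1 (mod 4), let k ≥ 1, and let a be an integer with gcd(a,p) = 1. Then c_2(a;p^k) = 1, i.e., #S̄_2(a;p^k) = #D̄_2(a;p^k). -/
/-- The reduced coordinate difference set `D̄_2(a;n)` of the modular hyperbola `H_2(a;n)`. -/
def coordDiffset (a : ℤ) (n : ℕ) : Set (ZMod n) :=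
  {s | ∃ x y : ℤ, x * y ≡ a [ZMOD (n : ℤ)] ∧ 1 ≤ x ∧ x < n ∧ 1 ≤ y ∧ y < n ∧
    s = ((x - y : ℤ) : ZMod n)}

/-- The ratio `c_2(a;n) = #S̄_2(a;n) / #D̄_2(a;n)`. -/
noncomputable def c2 (a : ℤ) (n : ℕ) : ℚ :=
  ((coordSumset a n).ncard : ℚ) / ((coordDiffset a n).ncard : ℚ)


-- square root of -1 mod p^k
lemma sqneg (p : ℕ) (hp : p.Prime) (hp4 : p % 4 = 1) :
    ∀ j : ℕ, ∃ m : ℤ, ((p : ℤ))^(j+1) ∣ m^2 + 1 := by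
  haveI : Fact p.Prime := ⟨hp⟩
  have hp2 : p ≠ 2 := by omega
  intro j
  induction j with
  | zero =>
      have h : IsSquare (-1 : ZMod p) := ZMod.exists_sq_eq_neg_one_iff.mpr (by omega)
      obtain ⟨r, hr⟩ := h
      refine ⟨(r.val : ℤ), ?_⟩
      rw [pow_one, ← ZMod.intCast_zmod_eq_zero_iff_dvd]
      push_cast
      rw [ZMod.natCast_val, ZMod.cast_id]
      rw [sq, ← hr]; ring
  | succ j ih =>
      obtain ⟨m, c, hc⟩ := ih
      have hM2 : ((m : ZMod p))^2 = -1 := by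
        have hdvd : (p : ℤ) ∣ m^2 + 1 := dvd_trans (dvd_pow_self _ (Nat.succ_ne_zero j)) ⟨c, hc⟩
        have := (ZMod.intCast_zmod_eq_zero_iff_dvd (m^2+1) p).mpr hdvd
        push_cast at this
        linear_combination this
      have hMne : ((m : ZMod p)) ≠ 0 := by
        intro h; rw [h] at hM2; simp at hM2
      have h2ne : ((2 : ZMod p)) ≠ 0 := by
        have : ((2:ℕ) : ZMod p) ≠ 0 := by
          rw [Ne, ZMod.natCast_eq_zero_iff]
          intro h
          exact hp2 ((Nat.prime_dvd_prime_iff_eq hp Nat.prime_two).mp h)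
        simpa using this
      set t : ZMod p := -(c : ZMod p) / (2 * (m : ZMod p)) with ht
      have key : ((c + 2*m*(t.val : ℤ) : ℤ) : ZMod p) = 0 := by
        push_cast
        rw [ZMod.natCast_val, ZMod.cast_id, ht]
        field_simp
        ring
      obtain ⟨d, hd⟩ := (ZMod.intCast_zmod_eq_zero_iff_dvd _ p).mp key
      refine ⟨m + (t.val : ℤ) * (p:ℤ)^(j+1), (d + (t.val:ℤ)^2 * (p:ℤ)^j), ?_⟩
      have : (m + (t.val : ℤ) * (p:ℤ)^(j+1))^2 + 1
          = (m^2+1) + (c + 2*m*(t.val:ℤ))*(p:ℤ)^(j+1) - c*(p:ℤ)^(j+1) + (t.val:ℤ)^2 * (p:ℤ)^(2*(j+1)) := by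
        ring
      rw [this, hc, hd]
      ring
-- given a point (x,y) on the hyperbola and a unit i with i²=-1, produce a new point
lemma twist (n : ℕ) (hn : 1 < n) (i : ZMod n) (hi : i^2 = -1) (a : ℤ)
    (hau : IsUnit ((a : ZMod n))) (x y : ℤ) (hxy : x * y ≡ a [ZMOD (n : ℤ)]) :
    ∃ u v : ℤ, u * v ≡ a [ZMOD (n : ℤ)] ∧ 1 ≤ u ∧ u < n ∧ 1 ≤ v ∧ v < n ∧
      ((u - v : ℤ) : ZMod n) = i * ((x + y : ℤ) : ZMod n) ∧
      ((u + v : ℤ) : ZMod n) = i * ((x - y : ℤ) : ZMod n) := by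
  haveI : NeZero n := ⟨by omega⟩
  haveI : Nontrivial (ZMod n) := ZMod.nontrivial_iff.mpr (by omega)
  have hiu : IsUnit i := by
    refine IsUnit.of_mul_eq_one (a := i) (-i) ?_
    rw [← neg_mul_eq_mul_neg, ← sq, hi, neg_neg]
  have hxyz : ((x : ZMod n)) * y = (a : ZMod n) := by
    have := (ZMod.intCast_eq_intCast_iff _ _ _).mpr hxy
    push_cast at this; exact this
  have hxu : IsUnit ((x : ZMod n)) := isUnit_of_mul_isUnit_left (hxyz ▸ hau)
  have hyu : IsUnit ((y : ZMod n)) := isUnit_of_mul_isUnit_right (hxyz ▸ hau)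
  set U : ZMod n := i * (x : ZMod n) with hU
  set V : ZMod n := (-i) * (y : ZMod n) with hV
  have hUu : IsUnit U := hiu.mul hxu
  have hVu : IsUnit V := (hiu.neg).mul hyu
  refine ⟨(U.val : ℤ), (V.val : ℤ), ?_, ?_, ?_, ?_, ?_, ?_, ?_⟩
  · rw [← ZMod.intCast_eq_intCast_iff]
    push_cast
    rw [ZMod.natCast_val, ZMod.cast_id, ZMod.natCast_val, ZMod.cast_id, hU, hV]
    calc i * (x:ZMod n) * (-i * (y:ZMod n)) = -(i^2) * ((x:ZMod n)*(y:ZMod n)) := by ring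
    _ = (a : ZMod n) := by rw [hi, hxyz]; ring
  · have : U.val ≠ 0 := by
      intro h
      exact hUu.ne_zero (by rwa [← ZMod.val_eq_zero])
    omega
  · exact_mod_cast ZMod.val_lt U
  · have : V.val ≠ 0 := by
      intro h
      exact hVu.ne_zero (by rwa [← ZMod.val_eq_zero])
    omega
  · exact_mod_cast ZMod.val_lt V
  · push_cast
    rw [ZMod.natCast_val, ZMod.cast_id, ZMod.natCast_val, ZMod.cast_id, hU, hV]
    ring
  · push_cast
    rw [ZMod.natCast_val, ZMod.cast_id, ZMod.natCast_val, ZMod.cast_id, hU, hV]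
    ring_nf

theorem stmt11 (p : ℕ) (hp : p.Prime) (hp4 : p % 4 = 1) (k : ℕ) (hk : 1 ≤ k)
    (a : ℤ) (ha : IsCoprime a (p : ℤ)) :
    c2 a (p ^ k) = 1 ∧ (coordSumset a (p ^ k)).ncard = (coordDiffset a (p ^ k)).ncard := by
  set n := p ^ k with hn
  have hn1 : 1 < n := by
    calc 1 < p := hp.one_lt
    _ = p ^ 1 := (pow_one p).symm
    _ ≤ p ^ k := Nat.pow_le_pow_right hp.pos hk
  haveI : NeZero n := ⟨by omega⟩
  haveI : Nontrivial (ZMod n) := ZMod.nontrivial_iff.mpr (by omega)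
  -- a is a unit mod n
  have hau : IsUnit ((a : ZMod n)) := by
    have hcop : IsCoprime a ((p : ℤ) ^ k) := ha.pow_right
    obtain ⟨u, v, huv⟩ := hcop
    refine IsUnit.of_mul_eq_one (u : ZMod n) ?_
    have hpk : (((p : ℤ) ^ k : ℤ) : ZMod n) = 0 := by
      rw [ZMod.intCast_zmod_eq_zero_iff_dvd]
      exact_mod_cast dvd_refl (n : ℤ)
    have := congrArg (fun z : ℤ => (z : ZMod n)) huv
    push_cast at this hpk
    rw [hpk] at this
    linear_combination this
  -- square root of -1 mod n
  obtain ⟨j, rfl⟩ : ∃ j, k = j + 1 := ⟨k - 1, by omega⟩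
  obtain ⟨m, hm⟩ := sqneg p hp hp4 j
  set i : ZMod n := (m : ZMod n) with hidef
  have hi : i ^ 2 = -1 := by
    have h0 : ((m ^ 2 + 1 : ℤ) : ZMod n) = 0 := by
      rw [ZMod.intCast_zmod_eq_zero_iff_dvd]
      exact_mod_cast hm
    push_cast at h0
    linear_combination h0
  have hiu : IsUnit i := by
    refine IsUnit.of_mul_eq_one (a := i) (-i) ?_
    rw [← neg_mul_eq_mul_neg, ← sq, hi, neg_neg]
  -- the twist maps
  have key1 : ∀ s ∈ coordSumset a n, i * s ∈ coordDiffset a n := by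
    rintro s ⟨x, y, hxy, hx1, hxn, hy1, hyn, rfl⟩
    obtain ⟨u, v, h1, h2, h3, h4, h5, h6, h7⟩ := twist n hn1 i hi a hau x y hxy
    exact ⟨u, v, h1, h2, h3, h4, h5, h6.symm⟩
  have key2 : ∀ d ∈ coordDiffset a n, i * d ∈ coordSumset a n := by
    rintro d ⟨x, y, hxy, hx1, hxn, hy1, hyn, rfl⟩
    obtain ⟨u, v, h1, h2, h3, h4, h5, h6, h7⟩ := twist n hn1 i hi a hau x y hxy
    exact ⟨u, v, h1, h2, h3, h4, h5, h7.symm⟩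
  have hinj : Function.Injective (fun z : ZMod n => i * z) := by
    intro z w h
    exact hiu.mul_left_cancel h
  have hcard : (coordSumset a n).ncard = (coordDiffset a n).ncard := by
    apply le_antisymm
    · calc (coordSumset a n).ncard
          = ((fun z : ZMod n => i * z) '' coordSumset a n).ncard :=
            (Set.ncard_image_of_injective _ hinj).symm
      _ ≤ (coordDiffset a n).ncard :=
            Set.ncard_le_ncard (by rintro _ ⟨s, hs, rfl⟩; exact key1 s hs)
              (Set.toFinite _)
    · calc (coordDiffset a n).ncard
          = ((fun z : ZMod n => i * z) '' coordDiffset a n).ncard :=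
            (Set.ncard_image_of_injective _ hinj).symm
      _ ≤ (coordSumset a n).ncard :=
            Set.ncard_le_ncard (by rintro _ ⟨s, hs, rfl⟩; exact key2 s hs)
              (Set.toFinite _)
  -- nonemptiness of the difference set
  have hne : (coordDiffset a n).Nonempty := by
    refine ⟨(((((a : ZMod n)).val : ℤ) - 1 : ℤ) : ZMod n),
      (((a : ZMod n)).val : ℤ), 1, ?_, ?_, ?_, ?_, ?_, rfl⟩
    · rw [← ZMod.intCast_eq_intCast_iff]
      push_cast
      rw [ZMod.natCast_val, ZMod.cast_id, mul_one]
    · have : ((a : ZMod n)).val ≠ 0 := by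
        intro h
        exact hau.ne_zero (by rwa [← ZMod.val_eq_zero])
      omega
    · exact_mod_cast ZMod.val_lt _
    · norm_num
    · exact_mod_cast hn1
  refine ⟨?_, hcard⟩
  have hdpos : 0 < (coordDiffset a n).ncard :=
    (Set.ncard_pos (Set.toFinite _)).mpr hne
  unfold c2
  rw [hcard, div_self]
  exact_mod_cast hdpos.ne'
end
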